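/- Run the Misra–Gries algorithm with ℓ counters on a stream of n items. Then r(ℓ+1) ≤ n (in particular r < n/ℓ whenever n ≥ 1), and for every item j one has 0 ≤ f_j − f̂_j ≤ r. -/

import Mathlib

/-- One step of the Misra–Gries algorithm with `ℓ` counters.  The state is the
function giving the current counter value of each item (an item is a stored
label iff its counter is positive).  If the arriving item `a` matches a stored
label, its counter is incremented; otherwise, if fewer than `ℓ` counters are
in use, `a` is stored with counter `1`; otherwise all counters are decremented
by `1`.  Returns the new state together with whether a decrement occurred. -/
def mgStep (u ℓ : ℕ) (s : Fin u → ℕ) (a : Fin u) : (Fin u → ℕ) × Bool :=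
  if 0 < s a then (Function.update s a (s a + 1), false)
  else if (Finset.univ.filter fun j => 0 < s j).card < ℓ then
    (Function.update s a 1, false)
  else ((fun j => s j - 1), true)

/-- Run the Misra–Gries algorithm with `ℓ` counters on a stream, starting from
all counters empty.  Returns the final counter values `f̂` together with the
number `r` of stream steps at which the decrement operation occurred. -/
def mgRun (u ℓ : ℕ) (stream : List (Fin u)) : (Fin u → ℕ) × ℕ :=
  stream.foldl
    (fun p a => ((mgStep u ℓ p.1 a).1, p.2 + if (mgStep u ℓ p.1 a).2 then 1 else 0))
    ((fun _ => 0), 0)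

def mgInv (u ℓ : ℕ) (L : List (Fin u)) (s : Fin u → ℕ) (r : ℕ) : Prop :=
  (Finset.univ.filter fun j => 0 < s j).card ≤ ℓ ∧
  (∑ j, s j) + r * (ℓ + 1) ≤ L.length ∧
  ∀ j, s j ≤ L.count j ∧ L.count j ≤ s j + r

lemma count_concat (u : ℕ) (L : List (Fin u)) (a j : Fin u) :
    (L ++ [a]).count j = L.count j + if a = j then 1 else 0 := by
  simp [List.count_append, List.count_singleton', eq_comm]

lemma mgStep_inv (u ℓ : ℕ) (L : List (Fin u)) (s : Fin u → ℕ) (r : ℕ) (a : Fin u)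
    (h : mgInv u ℓ L s r) :
    mgInv u ℓ (L ++ [a]) (mgStep u ℓ s a).1 (r + if (mgStep u ℓ s a).2 then 1 else 0) := by
  obtain ⟨hcard, hsum, hcnt⟩ := h
  have hlen : (L ++ [a]).length = L.length + 1 := by simp
  have hsplit : ∑ j, s j = s a + ∑ j ∈ Finset.univ \ {a}, s j := by
    rw [Finset.sdiff_singleton_eq_erase]
    exact (Finset.add_sum_erase _ s (Finset.mem_univ a)).symm
  unfold mgStep
  by_cases h1 : 0 < s a
  · simp only [h1, if_true]
    refine ⟨?_, ?_, ?_⟩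
    · have : (Finset.univ.filter fun j => 0 < Function.update s a (s a + 1) j)
          = Finset.univ.filter fun j => 0 < s j := by
        apply Finset.filter_congr
        intro j _
        rcases eq_or_ne j a with rfl | hj
        · simp [Function.update_self]; omega
        · simp [Function.update_of_ne hj]
      rw [this]; exact hcard
    · rw [Finset.sum_update_of_mem (Finset.mem_univ a), hlen]
      simp only [Bool.false_eq_true, if_false, add_zero]
      omega
    · intro j
      rw [count_concat]
      rcases eq_or_ne j a with rfl | hj
      · have := hcnt j
        simp [Function.update_self]
        omega
      · have := hcnt j
        have ha : a ≠ j := fun h => hj h.symm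
        simp [Function.update_of_ne hj, ha]
        omega
  · simp only [h1, if_false]
    by_cases h2 : (Finset.univ.filter fun j => 0 < s j).card < ℓ
    · simp only [h2, if_true]
      have hsa : s a = 0 := by omega
      refine ⟨?_, ?_, ?_⟩
      · have hsub : (Finset.univ.filter fun j => 0 < Function.update s a 1 j)
            ⊆ insert a (Finset.univ.filter fun j => 0 < s j) := by
          intro j hj
          rcases eq_or_ne j a with rfl | hja
          · exact Finset.mem_insert_self _ _
          · simp only [Finset.mem_filter, Function.update_of_ne hja] at hj
            exact Finset.mem_insert_of_mem (by simp [hj.2])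
        calc _ ≤ _ := Finset.card_le_card hsub
          _ ≤ (Finset.univ.filter fun j => 0 < s j).card + 1 := Finset.card_insert_le _ _
          _ ≤ ℓ := by omega
      · rw [Finset.sum_update_of_mem (Finset.mem_univ a), hlen]
        simp only [Bool.false_eq_true, if_false, add_zero]
        omega
      · intro j
        rw [count_concat]
        rcases eq_or_ne j a with rfl | hj
        · have := hcnt j
          simp [Function.update_self]
          omega
        · have := hcnt j
          have ha : a ≠ j := fun h => hj h.symm
          simp [Function.update_of_ne hj, ha]
          omega
    · simp only [h2, if_false]
      have hsa : s a = 0 := by omega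
      have hkey : ∑ j, s j = (∑ j, (s j - 1)) + (Finset.univ.filter fun j => 0 < s j).card := by
        rw [Finset.card_filter, ← Finset.sum_add_distrib]
        apply Finset.sum_congr rfl
        intro j _
        split <;> omega
      refine ⟨?_, ?_, ?_⟩
      · refine le_trans (Finset.card_le_card ?_) hcard
        intro j hj
        simp only [Finset.mem_filter] at hj ⊢
        exact ⟨hj.1, by omega⟩
      · rw [hlen]
        have hc : (Finset.univ.filter fun j => 0 < s j).card = ℓ := by omega
        simp only [if_pos rfl, if_true]
        have hexp : (r + 1) * (ℓ + 1) = r * (ℓ + 1) + (ℓ + 1) := by ring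
        omega
      · intro j
        rw [count_concat]
        rcases eq_or_ne j a with rfl | hj
        · have := hcnt j
          simp only [if_pos rfl]
          constructor <;> simp <;> omega
        · have := hcnt j
          have ha : a ≠ j := fun h => hj h.symm
          simp only [ha, if_false]
          constructor <;> simp <;> omega

lemma mgRun_inv (u ℓ : ℕ) (stream : List (Fin u)) :
    mgInv u ℓ stream (mgRun u ℓ stream).1 (mgRun u ℓ stream).2 := by
  induction stream using List.reverseRecOn with
  | nil =>
      have h0 : mgRun u ℓ [] = (fun _ => 0, 0) := rfl
      rw [h0]
      exact ⟨by simp, by simp, fun j => by simp⟩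
  | append_singleton l a ih =>
      have : mgRun u ℓ (l ++ [a]) =
          ((mgStep u ℓ (mgRun u ℓ l).1 a).1,
           (mgRun u ℓ l).2 + if (mgStep u ℓ (mgRun u ℓ l).1 a).2 then 1 else 0) := by
        rw [mgRun, List.foldl_append]; rfl
      rw [this]
      exact mgStep_inv u ℓ l _ _ a ih

/-- Run the Misra–Gries algorithm with `ℓ` counters on a stream of `n` items.
Then `r * (ℓ + 1) ≤ n` (in particular `r < n / ℓ` whenever `n ≥ 1`), and for
every item `j` one has `0 ≤ f_j - f̂_j ≤ r`, where `f_j` is the true frequency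
of `j`, `f̂_j` is its final counter value, and `r` is the number of stream
steps at which the decrement operation occurs. -/
theorem misraGries_basic_bounds (u ℓ : ℕ) (hℓ : 1 ≤ ℓ) (stream : List (Fin u)) :
    (mgRun u ℓ stream).2 * (ℓ + 1) ≤ stream.length ∧
    (1 ≤ stream.length →
      ((mgRun u ℓ stream).2 : ℝ) < (stream.length : ℝ) / (ℓ : ℝ)) ∧
    ∀ j : Fin u,
      0 ≤ (stream.count j : ℝ) - ((mgRun u ℓ stream).1 j : ℝ) ∧
      (stream.count j : ℝ) - ((mgRun u ℓ stream).1 j : ℝ) ≤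
        ((mgRun u ℓ stream).2 : ℝ) := by
  obtain ⟨hcard, hsum, hcnt⟩ := mgRun_inv u ℓ stream
  set r := (mgRun u ℓ stream).2
  refine ⟨by omega, ?_, ?_⟩
  · intro hn
    have h1 : r * (ℓ + 1) ≤ stream.length := le_trans (Nat.le_add_left _ _) hsum
    have hlt : r * ℓ < stream.length := by
      rcases Nat.eq_zero_or_pos r with h0 | h0
      · rw [h0, Nat.zero_mul]; omega
      · nlinarith [h1, h0]
    rw [lt_div_iff₀ (by exact_mod_cast hℓ : (0:ℝ) < ℓ)]
    exact_mod_cast hlt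
  · intro j
    obtain ⟨h1, h2⟩ := hcnt j
    constructor
    · have : ((mgRun u ℓ stream).1 j : ℝ) ≤ (stream.count j : ℝ) := by exact_mod_cast h1
      linarith
    · have : (stream.count j : ℝ) ≤ ((mgRun u ℓ stream).1 j : ℝ) + r := by exact_mod_cast h2
      linarith
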